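/- Let θ : ℝ → ℝ^d and μ : ℝ → (Fin N → ℝ) be functions with μ t ∈ Δ for all t ≥ 0, and let w : ℝ → ℝ^m satisfy the critic equation: for all t ≥ 0, HasDerivAt w (b(θ t, μ t) − A(θ t, μ t) (w t)) t. Then for all t ≥ 0, ‖w t‖² ≤ exp(−λ_c t) * ‖w 0‖² + (B_b²/λ_c²) * (1 − exp(−λ_c t)). -/

import Mathlib

open scoped BigOperators RealInnerProductSpace

/-- The probability simplex on `Fin N`. -/
def probSimplex (N : ℕ) : Set (Fin N → ℝ) :=
  {μ | (∀ i, 0 ≤ μ i) ∧ ∑ i, μ i = 1}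

/-- Softmax policy. -/
noncomputable def softmaxPolicy {N K d : ℕ} (τ : ℝ)
    (ψ : Fin N → Fin K → EuclideanSpace ℝ (Fin d))
    (θ : EuclideanSpace ℝ (Fin d)) (i : Fin N) (a : Fin K) : ℝ :=
  Real.exp (⟪ψ i a, θ⟫ / τ) / ∑ b, Real.exp (⟪ψ i b, θ⟫ / τ)

/-- Occupancy measure. -/
noncomputable def occupancy {N K d : ℕ} (τ : ℝ)
    (ψ : Fin N → Fin K → EuclideanSpace ℝ (Fin d))
    (θ : EuclideanSpace ℝ (Fin d)) (μ : Fin N → ℝ) (i : Fin N) (a : Fin K) : ℝ :=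
  μ i * softmaxPolicy τ ψ θ i a

/-- The averaged reward-weighted feature `b(θ,μ)`. -/
noncomputable def criticb {N K d m : ℕ} (τ : ℝ)
    (r : Fin N → Fin K → ℝ)
    (ψ : Fin N → Fin K → EuclideanSpace ℝ (Fin d))
    (φ : Fin N → Fin K → EuclideanSpace ℝ (Fin m))
    (θ : EuclideanSpace ℝ (Fin d)) (μ : Fin N → ℝ) : EuclideanSpace ℝ (Fin m) :=
  ∑ i, ∑ a, occupancy τ ψ θ μ i a • r i a • φ i a

/-- The critic operator `A(θ,μ)`. -/
noncomputable def criticA {N K d m : ℕ} (τ lamc : ℝ)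
    (ψ : Fin N → Fin K → EuclideanSpace ℝ (Fin d))
    (φ : Fin N → Fin K → EuclideanSpace ℝ (Fin m))
    (θ : EuclideanSpace ℝ (Fin d)) (μ : Fin N → ℝ)
    (v : EuclideanSpace ℝ (Fin m)) : EuclideanSpace ℝ (Fin m) :=
  lamc • v + ∑ i, ∑ a, occupancy τ ψ θ μ i a • ⟪φ i a, v⟫ • φ i a

/-- `max_{i,a} f i a` over the (nonempty, by `hN, hK`) finite index set. -/
noncomputable def maxOver {N K : ℕ} (hN : 1 ≤ N) (hK : 1 ≤ K)
    (f : Fin N → Fin K → ℝ) : ℝ :=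
  Finset.sup' Finset.univ
    (by
      haveI : Nonempty (Fin N) := ⟨⟨0, hN⟩⟩
      haveI : Nonempty (Fin K) := ⟨⟨0, hK⟩⟩
      exact Finset.univ_nonempty)
    (fun p : Fin N × Fin K => f p.1 p.2)

theorem critic_energy_estimate {N K d m : ℕ}
    (hN : 1 ≤ N) (hK : 1 ≤ K) (hd : 1 ≤ d) (hm : 1 ≤ m)
    (τ lamc : ℝ) (hτ : 0 < τ) (hlam : 0 < lamc)
    (r : Fin N → Fin K → ℝ)
    (ψ : Fin N → Fin K → EuclideanSpace ℝ (Fin d))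
    (φ : Fin N → Fin K → EuclideanSpace ℝ (Fin m))
    (θ : ℝ → EuclideanSpace ℝ (Fin d)) (μ : ℝ → (Fin N → ℝ))
    (hμ : ∀ t : ℝ, 0 ≤ t → μ t ∈ probSimplex N)
    (w : ℝ → EuclideanSpace ℝ (Fin m))
    (hw : ∀ t : ℝ, 0 ≤ t →
      HasDerivAt w (criticb τ r ψ φ (θ t) (μ t) - criticA τ lamc ψ φ (θ t) (μ t) (w t)) t) :
    ∀ t : ℝ, 0 ≤ t →
      ‖w t‖ ^ 2 ≤ Real.exp (-lamc * t) * ‖w 0‖ ^ 2 +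
        ((maxOver hN hK fun i a => |r i a|) * (maxOver hN hK fun i a => ‖φ i a‖)) ^ 2
          / lamc ^ 2 * (1 - Real.exp (-lamc * t)) := by
  classical
  haveI : Nonempty (Fin N) := ⟨⟨0, hN⟩⟩
  haveI : Nonempty (Fin K) := ⟨⟨0, hK⟩⟩
  set Mr := maxOver hN hK fun i a => |r i a| with hMrdef
  set Mφ := maxOver hN hK fun i a => ‖φ i a‖ with hMφdef
  have hMr : ∀ i a, |r i a| ≤ Mr := fun i a =>
    Finset.le_sup' (f := fun p : Fin N × Fin K => |r p.1 p.2|) (Finset.mem_univ (i, a))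
  have hMφ : ∀ i a, ‖φ i a‖ ≤ Mφ := fun i a =>
    Finset.le_sup' (f := fun p : Fin N × Fin K => ‖φ p.1 p.2‖) (Finset.mem_univ (i, a))
  have hMr0 : 0 ≤ Mr := le_trans (abs_nonneg _) (hMr ⟨0, hN⟩ ⟨0, hK⟩)
  have hMφ0 : 0 ≤ Mφ := le_trans (norm_nonneg _) (hMφ ⟨0, hN⟩ ⟨0, hK⟩)
  set B := Mr * Mφ with hBdef
  have hB0 : 0 ≤ B := mul_nonneg hMr0 hMφ0
  set C := B ^ 2 / lamc ^ 2 with hCdef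
  have hCe : lamc * C = B ^ 2 / lamc := by
    rw [hCdef]; field_simp
  -- occupancy properties
  have hν0 : ∀ t, 0 ≤ t → ∀ i a, 0 ≤ occupancy τ ψ (θ t) (μ t) i a := by
    intro t ht i a
    refine mul_nonneg ((hμ t ht).1 i) ?_
    unfold softmaxPolicy
    positivity
  have hνsum : ∀ t, 0 ≤ t → ∑ i, ∑ a, occupancy τ ψ (θ t) (μ t) i a = 1 := by
    intro t ht
    have h1 : ∀ i, ∑ a, softmaxPolicy τ ψ (θ t) i a = 1 := by
      intro i
      unfold softmaxPolicy
      rw [← Finset.sum_div]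
      refine div_self ?_
      positivity
    calc ∑ i, ∑ a, occupancy τ ψ (θ t) (μ t) i a
        = ∑ i, μ t i * ∑ a, softmaxPolicy τ ψ (θ t) i a := by
          simp [occupancy, Finset.mul_sum]
      _ = ∑ i, μ t i := by simp [h1]
      _ = 1 := (hμ t ht).2
  -- bound on ⟪w, b⟫
  have hbnd : ∀ t, 0 ≤ t → ⟪w t, criticb τ r ψ φ (θ t) (μ t)⟫ ≤ B * ‖w t‖ := by
    intro t ht
    have hrw : ⟪w t, criticb τ r ψ φ (θ t) (μ t)⟫
        = ∑ i, ∑ a, occupancy τ ψ (θ t) (μ t) i a * (r i a * ⟪w t, φ i a⟫) := by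
      rw [criticb, inner_sum]
      refine Finset.sum_congr rfl fun i _ => ?_
      rw [inner_sum]
      refine Finset.sum_congr rfl fun a _ => ?_
      rw [real_inner_smul_right, real_inner_smul_right]
    rw [hrw]
    calc ∑ i, ∑ a, occupancy τ ψ (θ t) (μ t) i a * (r i a * ⟪w t, φ i a⟫)
        ≤ ∑ i, ∑ a, occupancy τ ψ (θ t) (μ t) i a * (B * ‖w t‖) := by
          refine Finset.sum_le_sum fun i _ => Finset.sum_le_sum fun a _ => ?_
          refine mul_le_mul_of_nonneg_left ?_ (hν0 t ht i a)
          refine (le_abs_self _).trans ?_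
          rw [abs_mul]
          calc |r i a| * |⟪w t, φ i a⟫| ≤ Mr * (‖w t‖ * ‖φ i a‖) :=
                mul_le_mul (hMr i a) (abs_real_inner_le_norm _ _) (abs_nonneg _) hMr0
            _ = Mr * ‖φ i a‖ * ‖w t‖ := by ring
            _ ≤ Mr * Mφ * ‖w t‖ :=
                mul_le_mul_of_nonneg_right
                  (mul_le_mul_of_nonneg_left (hMφ i a) hMr0) (norm_nonneg _)
            _ = B * ‖w t‖ := by rw [hBdef]
      _ = (∑ i, ∑ a, occupancy τ ψ (θ t) (μ t) i a) * (B * ‖w t‖) := by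
          simp [Finset.sum_mul]
      _ = B * ‖w t‖ := by rw [hνsum t ht, one_mul]
  -- lower bound on ⟪w, A w⟫
  have hA : ∀ t, 0 ≤ t →
      lamc * ⟪w t, w t⟫ ≤ ⟪w t, criticA τ lamc ψ φ (θ t) (μ t) (w t)⟫ := by
    intro t ht
    have hrw : ⟪w t, criticA τ lamc ψ φ (θ t) (μ t) (w t)⟫
        = lamc * ⟪w t, w t⟫ +
          ∑ i, ∑ a, occupancy τ ψ (θ t) (μ t) i a * (⟪φ i a, w t⟫ * ⟪w t, φ i a⟫) := by
      rw [criticA, inner_add_right, real_inner_smul_right, inner_sum]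
      congr 1
      refine Finset.sum_congr rfl fun i _ => ?_
      rw [inner_sum]
      refine Finset.sum_congr rfl fun a _ => ?_
      rw [real_inner_smul_right, real_inner_smul_right]
    rw [hrw]
    have hnn : 0 ≤ ∑ i, ∑ a,
        occupancy τ ψ (θ t) (μ t) i a * (⟪φ i a, w t⟫ * ⟪w t, φ i a⟫) := by
      refine Finset.sum_nonneg fun i _ => Finset.sum_nonneg fun a _ => ?_
      refine mul_nonneg (hν0 t ht i a) ?_
      rw [real_inner_comm (w t) (φ i a)]
      exact mul_self_nonneg _
    linarith
  -- energy function and Lyapunov argument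
  set V : ℝ → ℝ := fun s => ⟪w s, w s⟫ with hVdef
  have hVnorm : ∀ s, V s = ‖w s‖ ^ 2 := fun s => real_inner_self_eq_norm_sq (w s)
  set g : ℝ → ℝ := fun s => Real.exp (lamc * s) * (V s - C) with hgdef
  have hVd : ∀ t, 0 ≤ t → HasDerivAt V
      (2 * ⟪w t, criticb τ r ψ φ (θ t) (μ t) - criticA τ lamc ψ φ (θ t) (μ t) (w t)⟫) t := by
    intro t ht
    have h := (hw t ht).inner ℝ (hw t ht)
    have heq : ⟪w t, criticb τ r ψ φ (θ t) (μ t) - criticA τ lamc ψ φ (θ t) (μ t) (w t)⟫ +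
        ⟪criticb τ r ψ φ (θ t) (μ t) - criticA τ lamc ψ φ (θ t) (μ t) (w t), w t⟫ =
        2 * ⟪w t, criticb τ r ψ φ (θ t) (μ t) - criticA τ lamc ψ φ (θ t) (μ t) (w t)⟫ := by
      rw [real_inner_comm (criticb τ r ψ φ (θ t) (μ t) -
        criticA τ lamc ψ φ (θ t) (μ t) (w t)) (w t)]
      ring
    rw [heq] at h
    exact h
  have hgd : ∀ t, 0 ≤ t → HasDerivAt g
      (Real.exp (lamc * t) * (lamc * (V t - C) +
        2 * ⟪w t, criticb τ r ψ φ (θ t) (μ t) - criticA τ lamc ψ φ (θ t) (μ t) (w t)⟫)) t := by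
    intro t ht
    have he : HasDerivAt (fun s => Real.exp (lamc * s)) (lamc * Real.exp (lamc * t)) t := by
      have h1 : HasDerivAt (fun s : ℝ => lamc * s) lamc t := by
        simpa using (hasDerivAt_id t).const_mul lamc
      exact ((Real.hasDerivAt_exp (lamc * t)).comp t h1).congr_deriv (mul_comm _ _)
    have := he.mul ((hVd t ht).sub_const C)
    exact this.congr_deriv (by ring)
  have hgle : ∀ t, 0 ≤ t →
      lamc * (V t - C) +
        2 * ⟪w t, criticb τ r ψ φ (θ t) (μ t) - criticA τ lamc ψ φ (θ t) (μ t) (w t)⟫ ≤ 0 := by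
    intro t ht
    have h1 := hbnd t ht
    have h2 := hA t ht
    have hsplit : ⟪w t, criticb τ r ψ φ (θ t) (μ t) - criticA τ lamc ψ φ (θ t) (μ t) (w t)⟫
        = ⟪w t, criticb τ r ψ φ (θ t) (μ t)⟫ -
          ⟪w t, criticA τ lamc ψ φ (θ t) (μ t) (w t)⟫ := inner_sub_right _ _ _
    rw [hsplit]
    have hn : V t = ‖w t‖ ^ 2 := hVnorm t
    have hsq : 0 ≤ (lamc * ‖w t‖ - B) ^ 2 := sq_nonneg _
    have hkey : 2 * (B * ‖w t‖) ≤ lamc * V t + lamc * C := by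
      rw [hn, hCe, ← mul_le_mul_iff_right₀ hlam]
      have hexp : lamc * (lamc * ‖w t‖ ^ 2 + B ^ 2 / lamc) = (lamc * ‖w t‖) ^ 2 + B ^ 2 := by
        field_simp
      rw [hexp]
      nlinarith [hsq]
    linarith
  -- antitonicity of g on [0, ∞)
  have hanti : AntitoneOn g (Set.Ici (0 : ℝ)) := by
    refine antitoneOn_of_deriv_nonpos (convex_Ici 0) ?_ ?_ ?_
    · exact fun t ht => (hgd t ht).continuousAt.continuousWithinAt
    · intro t ht
      rw [interior_Ici] at ht
      exact ((hgd t (le_of_lt ht)).differentiableAt).differentiableWithinAt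
    · intro t ht
      rw [interior_Ici] at ht
      have ht' : (0:ℝ) ≤ t := le_of_lt ht
      rw [(hgd t ht').deriv]
      exact mul_nonpos_of_nonneg_of_nonpos (Real.exp_nonneg _) (hgle t ht')
  intro t ht
  have hfin : g t ≤ g 0 := hanti (Set.self_mem_Ici) ht ht
  have hg0 : g 0 = V 0 - C := by simp [hgdef]
  have hgt : g t = Real.exp (lamc * t) * (V t - C) := rfl
  rw [hgt, hg0] at hfin
  have hEpos : 0 < Real.exp (-lamc * t) := Real.exp_pos _
  have hmul : Real.exp (-lamc * t) * Real.exp (lamc * t) = 1 := by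
    rw [← Real.exp_add]; ring_nf; exact Real.exp_zero
  have hstep := mul_le_mul_of_nonneg_left hfin hEpos.le
  have hVt := hVnorm t
  have hV0 := hVnorm 0
  have h4 : V t - C ≤ Real.exp (-lamc * t) * (V 0 - C) := by
    calc V t - C = Real.exp (-lamc * t) * Real.exp (lamc * t) * (V t - C) := by
          rw [hmul, one_mul]
      _ = Real.exp (-lamc * t) * (Real.exp (lamc * t) * (V t - C)) := by ring
      _ ≤ _ := hstep
  have h6 : V t ≤ Real.exp (-lamc * t) * V 0 + C * (1 - Real.exp (-lamc * t)) := by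
    have h5 : Real.exp (-lamc * t) * (V 0 - C) + C =
        Real.exp (-lamc * t) * V 0 + C * (1 - Real.exp (-lamc * t)) := by ring
    linarith [h4]
  rw [hVt, hV0] at h6
  exact h6
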